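/- Let v be a flat complete simple game on N = {1,…,n}. Then the raw Deegan-Packel index satisfies the dominance property on v: for all players i, j with i ⊒ j one has DP^r_i(v) ≥ DP^r_j(v). -/

import Mathlib

open scoped Classical

/-- A simple game on the player set `{1,…,n}` (modeled as `Fin n`):
a monotone map from coalitions to `{0,1}` (modeled as `Bool`) that is
`0` on the empty coalition and `1` on the grand coalition. -/
structure SimpleGame (n : ℕ) where
  win : Finset (Fin n) → Bool
  win_empty : win ∅ = false
  win_univ : win Finset.univ = true
  win_mono : ∀ ⦃S T : Finset (Fin n)⦄, S ⊆ T → win S = true → win T = true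

namespace SimpleGame

variable {n : ℕ}

/-- Player `i` dominates player `j`: `v((S ∪ {i}) \ {j}) ≥ v(S)` for every
coalition `S` with `j ∈ S` and `i ∉ S`. -/
def Dominates (v : SimpleGame n) (i j : Fin n) : Prop :=
  ∀ S : Finset (Fin n), j ∈ S → i ∉ S → v.win S ≤ v.win ((S ∪ {i}) \ {j})

/-- The game is complete if the dominance relation is a total preorder. -/
def IsComplete (v : SimpleGame n) : Prop :=
  (∀ i, v.Dominates i i) ∧
  (∀ i j, v.Dominates i j ∨ v.Dominates j i) ∧
  (∀ i j k, v.Dominates i j → v.Dominates j k → v.Dominates i k)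

/-- `S` is a minimal winning coalition: winning and every proper subset is losing. -/
def IsMWC (v : SimpleGame n) (S : Finset (Fin n)) : Prop :=
  v.win S = true ∧ ∀ T ⊂ S, v.win T = false

/-- `M_i`: the set of minimal winning coalitions containing player `i`. -/
noncomputable def Mset (v : SimpleGame n) (i : Fin n) : Finset (Finset (Fin n)) :=
  Finset.univ.filter fun S => v.IsMWC S ∧ i ∈ S

/-- `M_i(l)`: minimal winning coalitions of cardinality `l` containing `i`. -/
noncomputable def Mlset (v : SimpleGame n) (i : Fin n) (l : ℕ) : Finset (Finset (Fin n)) :=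
  (v.Mset i).filter fun S => S.card = l

/-- Raw Public Good index: `PGI^r_i(v) = |M_i|`. -/
noncomputable def PGI (v : SimpleGame n) (i : Fin n) : ℕ := (v.Mset i).card

/-- Raw Deegan-Packel index: `DP^r_i(v) = Σ_{S ∈ M_i} 1/|S|`. -/
noncomputable def DP (v : SimpleGame n) (i : Fin n) : ℝ :=
  ∑ S ∈ v.Mset i, (1 : ℝ) / (S.card : ℝ)

/-- The game is uniform if all minimal winning coalitions have the same cardinality. -/
def IsUniform (v : SimpleGame n) : Prop :=
  ∀ S T, v.IsMWC S → v.IsMWC T → S.card = T.card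

/-- `[q; w]` is a weighted representation of `v`. -/
def IsWeightedRep (v : SimpleGame n) (q : ℝ) (w : Fin n → ℝ) : Prop :=
  0 < q ∧ (∀ i, 0 ≤ w i) ∧ ∀ S : Finset (Fin n), v.win S = true ↔ q ≤ ∑ i ∈ S, w i

/-- The game is weighted. -/
def IsWeighted (v : SimpleGame n) : Prop := ∃ q w, v.IsWeightedRep q w

/-- `D_i`: coalitions decisive for player `i`. -/
noncomputable def Dset (v : SimpleGame n) (i : Fin n) : Finset (Finset (Fin n)) :=
  Finset.univ.filter fun S => i ∈ S ∧ v.win S = true ∧ v.win (S.erase i) = false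

/-- Raw Banzhaf index: `Bz^r_i(v) = |D_i|`. -/
noncomputable def Bz (v : SimpleGame n) (i : Fin n) : ℕ := (v.Dset i).card

/-- `S` is a shift-minimal winning coalition. -/
def IsSMWC (v : SimpleGame n) (S : Finset (Fin n)) : Prop :=
  v.IsMWC S ∧ ∀ i ∈ S, ∀ j ∉ S, v.Dominates i j → ¬ v.Dominates j i →
    v.win ((S \ {i}) ∪ {j}) = false

/-- `𝒮_i`: the set of shift-minimal winning coalitions containing player `i`. -/
noncomputable def Sset (v : SimpleGame n) (i : Fin n) : Finset (Finset (Fin n)) :=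
  Finset.univ.filter fun S => v.IsSMWC S ∧ i ∈ S

/-- Raw Shift index: `S^r_i(v) = |𝒮_i|`. -/
noncomputable def ShiftIdx (v : SimpleGame n) (i : Fin n) : ℕ := (v.Sset i).card

/-- The number of players for which the coalition `S` is decisive. -/
noncomputable def numDecisive (v : SimpleGame n) (S : Finset (Fin n)) : ℕ :=
  (Finset.univ.filter fun k => k ∈ S ∧ v.win S = true ∧ v.win (S.erase k) = false).card

/-- Raw Johnston index: `Jo^r_i(v) = Σ_{S ∈ D_i} 1/#{decisive players of S}`. -/
noncomputable def Jo (v : SimpleGame n) (i : Fin n) : ℝ :=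
  ∑ S ∈ v.Dset i, (1 : ℝ) / (v.numDecisive S : ℝ)

/-- `i` is a null player: it belongs to no minimal winning coalition. -/
def IsNull (v : SimpleGame n) (i : Fin n) : Prop := ∀ S, v.IsMWC S → i ∉ S

end SimpleGame

/-- A power index: assigns to every `n`-player simple game a vector in `ℝ^n`. -/
abbrev PowerIndex : Type := ∀ n : ℕ, SimpleGame n → Fin n → ℝ

/-- A class of games (one set of games for every number of players). -/
abbrev GameClass : Type := ∀ n : ℕ, Set (SimpleGame n)

/-- Convex combination `P^α = Σ_h α_h P^h` of power indices. -/
noncomputable def convexComb {r : ℕ} (α : Fin r → ℝ) (P : Fin r → PowerIndex) : PowerIndex :=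
  fun n v i => ∑ h, α h * P h n v i

/-- `Q` satisfies local monotonicity on the `n`-player games of `𝔊`. -/
def LMon (𝔊 : GameClass) (n : ℕ) (Q : PowerIndex) : Prop :=
  ∀ v ∈ 𝔊 n, ∀ i j : Fin n, v.Dominates i j → Q n v j ≤ Q n v i

/-- The cost of local monotonicity `c_𝒫(n,𝔊)`. -/
noncomputable def costLM {r : ℕ} [NeZero r] (P : Fin r → PowerIndex) (n : ℕ)
    (𝔊 : GameClass) : ℝ :=
  sInf {β : ℝ | β ∈ Set.Icc (0 : ℝ) 1 ∧
    ∀ α ∈ stdSimplex ℝ (Fin r), β ≤ α 0 → LMon 𝔊 n (convexComb α P)}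

/-- The raw Banzhaf index as a power index. -/
noncomputable def BzPI : PowerIndex := fun _ v i => (v.Bz i : ℝ)

/-- The raw Public Good index as a power index. -/
noncomputable def PGIPI : PowerIndex := fun _ v i => (v.PGI i : ℝ)

/-- The raw Shift index as a power index. -/
noncomputable def ShiftPI : PowerIndex := fun _ v i => (v.ShiftIdx i : ℝ)

/-- The raw Johnston index as a power index. -/
noncomputable def JoPI : PowerIndex := fun _ v i => v.Jo i

/-- The raw Deegan-Packel index as a power index. -/
noncomputable def DPPI : PowerIndex := fun _ v i => v.DP i

/-- `𝔚`: the class of weighted games. -/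
def WeightedClass : GameClass := fun _ => {v | v.IsWeighted}

/-- The layer relation `i ≿ j`: for every `k = 1,…,n` the partial sums
`Σ_{l=1}^k |M_i(l)|` dominate those of `j`. -/
def SimpleGame.LayerGE {n : ℕ} (v : SimpleGame n) (i j : Fin n) : Prop :=
  ∀ k ∈ Finset.Icc 1 n,
    ∑ l ∈ Finset.Icc 1 k, (v.Mlset j l).card ≤ ∑ l ∈ Finset.Icc 1 k, (v.Mlset i l).card

/-- The game is flat if any two players are comparable under the layer relation. -/
def SimpleGame.IsFlat {n : ℕ} (v : SimpleGame n) : Prop :=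
  ∀ i j : Fin n, v.LayerGE i j ∨ v.LayerGE j i

section AuxProof

open Finset

variable {n : ℕ}

private lemma bool_true_le {b : Bool} (h : true ≤ b) : b = true := by
  cases b
  · exact absurd h (by decide)
  · rfl

lemma SimpleGame.exists_mwc_subset (v : SimpleGame n) :
    ∀ S : Finset (Fin n), v.win S = true → ∃ T, T ⊆ S ∧ v.IsMWC T := by
  intro S
  induction S using Finset.strongInductionOn with
  | _ S ih =>
    intro hS
    by_cases h : ∀ T ⊂ S, v.win T = false
    · exact ⟨S, Finset.Subset.refl S, hS, h⟩
    · push_neg at h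
      obtain ⟨T, hT, hTw⟩ := h
      obtain ⟨U, hUT, hU⟩ := ih T hT (by simpa using hTw)
      exact ⟨U, hUT.trans hT.subset, hU⟩

lemma SimpleGame.IsMWC.one_le_card {v : SimpleGame n} {S : Finset (Fin n)}
    (h : v.IsMWC S) : 1 ≤ S.card := by
  rcases Finset.eq_empty_or_nonempty S with rfl | hne
  · have := h.1
    rw [v.win_empty] at this
    exact absurd this (by decide)
  · exact hne.card_pos

lemma SimpleGame.IsMWC.card_le {v : SimpleGame n} {S : Finset (Fin n)}
    (h : v.IsMWC S) : S.card ≤ n := by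
  have := Finset.card_le_univ S
  simpa using this

private lemma swap_card {i j : Fin n} (hij : i ≠ j) {S : Finset (Fin n)}
    (hj : j ∈ S) (hi : i ∉ S) : ((S ∪ {i}) \ {j}).card = S.card := by
  rw [Finset.union_comm, show ({i} : Finset (Fin n)) ∪ S = insert i S from rfl,
    ← Finset.erase_eq, Finset.card_erase_of_mem (Finset.mem_insert_of_mem hj),
    Finset.card_insert_of_notMem hi]
  omega

private lemma swap_swap {i j : Fin n} (hij : i ≠ j) {S : Finset (Fin n)}
    (hj : j ∈ S) (hi : i ∉ S) : (((S ∪ {i}) \ {j}) ∪ {j}) \ {i} = S := by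
  ext x
  simp only [Finset.mem_sdiff, Finset.mem_union, Finset.mem_singleton]
  constructor
  · rintro ⟨(⟨h1, hxj⟩ | rfl), h2⟩
    · rcases h1 with h | rfl
      · exact h
      · exact absurd rfl h2
    · exact hj
  · intro hx
    refine ⟨?_, fun h => hi (h ▸ hx)⟩
    by_cases hxj : x = j
    · exact Or.inr hxj
    · exact Or.inl ⟨Or.inl hx, hxj⟩


private lemma mem_swap_i {i j : Fin n} (hij : i ≠ j) (S : Finset (Fin n)) :
    i ∈ (S ∪ {i}) \ {j} := by
  simp [hij]

private lemma not_mem_swap_j {i j : Fin n} (S : Finset (Fin n)) :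
    j ∉ (S ∪ {i}) \ {j} := by simp

lemma SimpleGame.swap_mwc (v : SimpleGame n) {i j : Fin n} (hij : i ≠ j)
    (hdom : v.Dominates i j) {S : Finset (Fin n)} (hS : v.IsMWC S)
    (hjS : j ∈ S) (hiS : i ∉ S)
    (H : ∀ U, v.IsMWC U → i ∈ U → j ∉ U → U.card < S.card →
      v.win ((U ∪ {j}) \ {i}) = true) :
    v.IsMWC ((S ∪ {i}) \ {j}) := by
  have hwinT : v.win ((S ∪ {i}) \ {j}) = true := by
    have h := hdom S hjS hiS
    rw [hS.1] at h
    exact bool_true_le h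
  refine ⟨hwinT, ?_⟩
  intro V hV
  by_contra hVw
  rw [Bool.not_eq_false] at hVw
  obtain ⟨U, hUV, hU⟩ := v.exists_mwc_subset V hVw
  have hUT : U ⊆ (S ∪ {i}) \ {j} := hUV.trans hV.subset
  have hcardT : ((S ∪ {i}) \ {j}).card = S.card := swap_card hij hjS hiS
  have hUcard : U.card < S.card := by
    have h1 : U.card ≤ V.card := Finset.card_le_card hUV
    have h2 : V.card < ((S ∪ {i}) \ {j}).card := Finset.card_lt_card hV
    omega
  have hjU : j ∉ U := fun h => not_mem_swap_j S (hUT h)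
  have hiU : i ∈ U := by
    by_contra hiU
    have hUS : U ⊆ S := by
      intro x hx
      have hx' := hUT hx
      simp only [Finset.mem_sdiff, Finset.mem_union, Finset.mem_singleton] at hx'
      rcases hx'.1 with h | rfl
      · exact h
      · exact absurd hx hiU
    have hUSs : U ⊂ S := ⟨hUS, fun h => hjU (h hjS)⟩
    have := hS.2 U hUSs
    rw [hU.1] at this
    exact absurd this (by decide)
  have hW := H U hU hiU hjU hUcard
  have hWS : (U ∪ {j}) \ {i} ⊆ S := by
    intro x hx
    simp only [Finset.mem_sdiff, Finset.mem_union, Finset.mem_singleton] at hx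
    rcases hx.1 with h | rfl
    · have hx' := hUT h
      simp only [Finset.mem_sdiff, Finset.mem_union, Finset.mem_singleton] at hx'
      rcases hx'.1 with h' | h'
      · exact h'
      · exact absurd h' hx.2
    · exact hjS
  have hWcard : ((U ∪ {j}) \ {i}).card = U.card := swap_card (Ne.symm hij) hiU hjU
  have hWSs : (U ∪ {j}) \ {i} ⊂ S :=
    ⟨hWS, fun h => by have := Finset.card_le_card h; omega⟩
  have := hS.2 _ hWSs
  rw [hW] at this
  exact absurd this (by decide)

lemma SimpleGame.mem_Mset_iff {v : SimpleGame n} {i : Fin n} {S : Finset (Fin n)} :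
    S ∈ v.Mset i ↔ v.IsMWC S ∧ i ∈ S := by
  simp [SimpleGame.Mset]

/-- The key injection lemma: under dominance and the swap-back hypothesis `H`,
the count of MWCs of size `≤ k` containing `j` but avoiding a "bad" set `E`
is at most the corresponding count for `i`. -/
lemma SimpleGame.cum_card_le (v : SimpleGame n) {i j : Fin n} (hij : i ≠ j)
    (hdom : v.Dominates i j) (k : ℕ) (Y : Finset (Finset (Fin n)))
    (hY : Y = (v.Mset i).filter fun S => S.card ≤ k)
    (H : ∀ U, v.IsMWC U → i ∈ U → j ∉ U → U.card < k →
      v.win ((U ∪ {j}) \ {i}) = true) :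
    ((v.Mset j).filter fun S => S.card ≤ k).card ≤ Y.card := by
  subst hY
  apply Finset.card_le_card_of_injOn (fun S => if i ∈ S then S else (S ∪ {i}) \ {j})
  · intro S hS
    simp only [Finset.mem_coe, Finset.mem_filter, SimpleGame.mem_Mset_iff] at hS ⊢
    obtain ⟨⟨hmwc, hjS⟩, hcard⟩ := hS
    by_cases hiS : i ∈ S
    · simp only [if_pos hiS]
      exact ⟨⟨hmwc, hiS⟩, hcard⟩
    · simp only [if_neg hiS]
      refine ⟨⟨v.swap_mwc hij hdom hmwc hjS hiS ?_, mem_swap_i hij S⟩, ?_⟩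
      · intro U hU hiU hjU hlt
        exact H U hU hiU hjU (lt_of_lt_of_le hlt hcard)
      · rw [swap_card hij hjS hiS]; exact hcard
  · intro S₁ hS₁ S₂ hS₂ heq
    simp only [Finset.coe_filter, Set.mem_setOf_eq, SimpleGame.mem_Mset_iff] at hS₁ hS₂
    dsimp only at heq
    by_cases h1 : i ∈ S₁ <;> by_cases h2 : i ∈ S₂
    · rwa [if_pos h1, if_pos h2] at heq
    · rw [if_pos h1, if_neg h2] at heq
      exact absurd (heq ▸ hS₁.1.2 : j ∈ (S₂ ∪ {i}) \ {j}) (not_mem_swap_j S₂)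
    · rw [if_neg h1, if_pos h2] at heq
      exact absurd (heq ▸ hS₂.1.2 : j ∈ (S₁ ∪ {i}) \ {j}) (not_mem_swap_j S₁)
    · rw [if_neg h1, if_neg h2] at heq
      have e1 := swap_swap hij hS₁.1.2 h1
      have e2 := swap_swap hij hS₂.1.2 h2
      rw [← e1, ← e2, heq]

lemma SimpleGame.sum_mlset_card (v : SimpleGame n) (i : Fin n) (k : ℕ) :
    ∑ l ∈ Finset.Icc 1 k, (v.Mlset i l).card
      = ((v.Mset i).filter fun S => S.card ≤ k).card := by
  symm
  rw [Finset.card_eq_sum_card_fiberwise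
    (f := Finset.card) (t := Finset.Icc 1 k) ?_]
  · apply Finset.sum_congr rfl
    intro l hl
    rw [Finset.mem_Icc] at hl
    congr 1
    rw [SimpleGame.Mlset]
    ext S
    simp only [Finset.mem_filter]
    constructor
    · rintro ⟨⟨hm, _⟩, hc⟩
      exact ⟨hm, hc⟩
    · rintro ⟨hm, hc⟩
      exact ⟨⟨hm, by omega⟩, hc⟩
  · intro S hS
    simp only [Finset.mem_coe, Finset.mem_filter, SimpleGame.mem_Mset_iff] at hS
    rw [Finset.mem_coe, Finset.mem_Icc]
    exact ⟨hS.1.1.one_le_card, hS.2⟩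


private lemma swapfun_injOn {i j : Fin n} (hij : i ≠ j) :
    Set.InjOn (fun S : Finset (Fin n) => if i ∈ S then S else (S ∪ {i}) \ {j})
      {S | j ∈ S} := by
  intro S₁ hS₁ S₂ hS₂ heq
  simp only [Set.mem_setOf_eq] at hS₁ hS₂
  dsimp only at heq
  by_cases h1 : i ∈ S₁ <;> by_cases h2 : i ∈ S₂
  · rwa [if_pos h1, if_pos h2] at heq
  · rw [if_pos h1, if_neg h2] at heq
    exact absurd (heq ▸ hS₁ : j ∈ (S₂ ∪ {i}) \ {j}) (not_mem_swap_j S₂)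
  · rw [if_neg h1, if_pos h2] at heq
    exact absurd (heq ▸ hS₂ : j ∈ (S₁ ∪ {i}) \ {j}) (not_mem_swap_j S₁)
  · rw [if_neg h1, if_neg h2] at heq
    have e1 := swap_swap hij hS₁ h1
    have e2 := swap_swap hij hS₂ h2
    rw [← e1, ← e2, heq]

/-- Strict version: if moreover there is a minimal witness `S₀` against `j ⊒ i`
of size `≤ k`, the inequality is strict. -/
lemma SimpleGame.cum_card_lt (v : SimpleGame n) {i j : Fin n} (hij : i ≠ j)
    (hdom : v.Dominates i j) (k : ℕ)
    (H : ∀ U, v.IsMWC U → i ∈ U → j ∉ U → U.card < k →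
      v.win ((U ∪ {j}) \ {i}) = true)
    {S₀ : Finset (Fin n)} (hS₀ : v.IsMWC S₀) (hiS₀ : i ∈ S₀) (hjS₀ : j ∉ S₀)
    (hcS₀ : S₀.card ≤ k) (hbad : v.win ((S₀ ∪ {j}) \ {i}) = false) :
    ((v.Mset j).filter fun S => S.card ≤ k).card <
      ((v.Mset i).filter fun S => S.card ≤ k).card := by
  set Yi := (v.Mset i).filter fun S => S.card ≤ k with hYi
  have hS₀Y : S₀ ∈ Yi := by
    simp only [hYi, Finset.mem_filter, SimpleGame.mem_Mset_iff]
    exact ⟨⟨hS₀, hiS₀⟩, hcS₀⟩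
  have hle : ((v.Mset j).filter fun S => S.card ≤ k).card ≤ (Yi.erase S₀).card := by
    apply Finset.card_le_card_of_injOn
      (fun S => if i ∈ S then S else (S ∪ {i}) \ {j})
    · intro S hS
      simp only [Finset.mem_coe, Finset.mem_filter, SimpleGame.mem_Mset_iff] at hS
      obtain ⟨⟨hmwc, hjS⟩, hcard⟩ := hS
      rw [Finset.mem_coe, Finset.mem_erase]
      by_cases hiS : i ∈ S
      · simp only [if_pos hiS]
        refine ⟨fun h => hjS₀ (h ▸ hjS), ?_⟩
        simp only [hYi, Finset.mem_filter, SimpleGame.mem_Mset_iff]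
        exact ⟨⟨hmwc, hiS⟩, hcard⟩
      · simp only [if_neg hiS]
        refine ⟨?_, ?_⟩
        · intro h
          have hSe : S = (S₀ ∪ {j}) \ {i} := by
            rw [← h, swap_swap hij hjS hiS]
          have := hmwc.1
          rw [hSe, hbad] at this
          exact absurd this (by decide)
        · simp only [hYi, Finset.mem_filter, SimpleGame.mem_Mset_iff]
          refine ⟨⟨v.swap_mwc hij hdom hmwc hjS hiS ?_, mem_swap_i hij S⟩, ?_⟩
          · intro U hU hiU hjU hlt
            exact H U hU hiU hjU (lt_of_lt_of_le hlt hcard)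
          · rw [swap_card hij hjS hiS]; exact hcard
    · apply (swapfun_injOn hij).mono
      intro S hS
      simp only [Finset.coe_filter, Set.mem_setOf_eq, SimpleGame.mem_Mset_iff] at hS
      exact hS.1.2
  have h1 : (Yi.erase S₀).card = Yi.card - 1 := Finset.card_erase_of_mem hS₀Y
  have h2 : 1 ≤ Yi.card := Finset.card_pos.mpr ⟨S₀, hS₀Y⟩
  omega

/-- Abel-summation comparison: if all partial sums of `b` are dominated by
those of `a`, then the weighted sums with antitone nonnegative weights compare. -/
private lemma abel_sum_le (a b : ℕ → ℕ) :
    ∀ (N : ℕ) (c : ℕ → ℝ), (∀ p q : ℕ, p ≤ q → c q ≤ c p) → (∀ p, 0 ≤ c p) →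
      (∀ k ∈ Finset.Icc 1 N,
        ∑ l ∈ Finset.Icc 1 k, b l ≤ ∑ l ∈ Finset.Icc 1 k, a l) →
      ∑ l ∈ Finset.Icc 1 N, (b l : ℝ) * c l
        ≤ ∑ l ∈ Finset.Icc 1 N, (a l : ℝ) * c l := by
  intro N
  induction N with
  | zero => intro c _ _ _; simp
  | succ N ih =>
    intro c hmono hpos hps
    have key : ∀ x : ℕ → ℕ, ∑ l ∈ Finset.Icc 1 (N + 1), (x l : ℝ) * c l
        = (∑ l ∈ Finset.Icc 1 N, (x l : ℝ) * (c (min l (N + 1)) - c (N + 1)))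
          + c (N + 1) * ∑ l ∈ Finset.Icc 1 (N + 1), (x l : ℝ) := by
      intro x
      have h1 : ∀ l ∈ Finset.Icc 1 N, (x l : ℝ) * (c (min l (N + 1)) - c (N + 1))
          = (x l : ℝ) * c l - (x l : ℝ) * c (N + 1) := by
        intro l hl
        rw [Finset.mem_Icc] at hl
        rw [min_eq_left (by omega)]
        ring
      rw [Finset.sum_congr rfl h1, Finset.sum_sub_distrib,
        Finset.sum_Icc_succ_top (by omega : 1 ≤ N + 1),
        Finset.sum_Icc_succ_top (by omega : 1 ≤ N + 1) (fun l => (x l : ℝ)),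
        ← Finset.sum_mul]
      ring
    rw [key a, key b]
    have hsum : ∑ l ∈ Finset.Icc 1 (N + 1), (b l : ℝ)
        ≤ ∑ l ∈ Finset.Icc 1 (N + 1), (a l : ℝ) := by
      have := hps (N + 1) (by rw [Finset.mem_Icc]; omega)
      push_cast
      exact_mod_cast this
    refine add_le_add ?_ (mul_le_mul_of_nonneg_left hsum (hpos (N + 1)))
    apply ih
    · intro p q hpq
      have : min p (N + 1) ≤ min q (N + 1) := min_le_min_right _ hpq
      have := hmono _ _ this
      linarith
    · intro p
      have := hmono (min p (N + 1)) (N + 1) (min_le_right _ _)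
      linarith
    · intro k hk
      rw [Finset.mem_Icc] at hk
      exact hps k (by rw [Finset.mem_Icc]; omega)

private noncomputable def cwt : ℕ → ℝ := fun l => if l = 0 then 1 else 1 / l

private lemma cwt_mono : ∀ p q : ℕ, p ≤ q → cwt q ≤ cwt p := by
  intro p q hpq
  by_cases hq : q = 0
  · have hp : p = 0 := by omega
    simp [cwt, hp, hq]
  · by_cases hp : p = 0
    · simp only [cwt, if_pos hp, if_neg hq]
      rw [div_le_one (by exact_mod_cast Nat.pos_of_ne_zero hq)]
      exact_mod_cast Nat.one_le_iff_ne_zero.mpr hq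
    · simp only [cwt, if_neg hp, if_neg hq]
      apply one_div_le_one_div_of_le
      · exact_mod_cast Nat.pos_of_ne_zero hp
      · exact_mod_cast hpq

private lemma cwt_nonneg : ∀ p : ℕ, 0 ≤ cwt p := by
  intro p
  by_cases hp : p = 0
  · simp [cwt, hp]
  · simp only [cwt, if_neg hp]
    positivity

lemma SimpleGame.dp_eq_sum (v : SimpleGame n) (i : Fin n) :
    v.DP i = ∑ l ∈ Finset.Icc 1 n, ((v.Mlset i l).card : ℝ) * cwt l := by
  rw [SimpleGame.DP]
  have hmap : ∀ S ∈ v.Mset i, S.card ∈ Finset.Icc 1 n := by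
    intro S hS
    rw [SimpleGame.mem_Mset_iff] at hS
    rw [Finset.mem_Icc]
    exact ⟨hS.1.one_le_card, hS.1.card_le⟩
  rw [← Finset.sum_fiberwise_of_maps_to hmap (fun S => (1 : ℝ) / (S.card : ℝ))]
  apply Finset.sum_congr rfl
  intro l hl
  rw [Finset.mem_Icc] at hl
  have hcongr : ∀ S ∈ (v.Mset i).filter (fun S => S.card = l),
      (1 : ℝ) / (S.card : ℝ) = cwt l := by
    intro S hS
    rw [Finset.mem_filter] at hS
    rw [hS.2, cwt, if_neg (by omega)]
  rw [Finset.sum_congr rfl hcongr, Finset.sum_const, nsmul_eq_mul, SimpleGame.Mlset]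



end AuxProof

/-- For a flat complete simple game, the raw Deegan-Packel index
satisfies the dominance property. -/
theorem dp_dominance_of_flat_complete {n : ℕ} (v : SimpleGame n)
    (hcomp : v.IsComplete) (hflat : v.IsFlat) (i j : Fin n)
    (hdom : v.Dominates i j) : v.DP j ≤ v.DP i := by
  by_cases hij : i = j
  · subst hij; exact le_refl _
  have key : v.LayerGE i j := by
    rcases hflat i j with h | h
    · exact h
    · intro k hk
      by_cases hji : v.Dominates j i
      · rw [SimpleGame.sum_mlset_card, SimpleGame.sum_mlset_card]
        apply v.cum_card_le hij hdom k _ rfl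
        intro U hU hiU hjU _
        have h' := hji U hiU hjU
        rw [hU.1] at h'
        exact bool_true_le h'
      · exfalso
        rw [SimpleGame.Dominates] at hji
        push_neg at hji
        obtain ⟨S₁, hiS₁, hjS₁, hlt⟩ := hji
        have hS₁w : v.win S₁ = true ∧ v.win ((S₁ ∪ {j}) \ {i}) = false := by
          revert hlt
          cases hwin1 : v.win S₁ <;> cases hwin2 : v.win ((S₁ ∪ {j}) \ {i}) <;> simp
        obtain ⟨U₁, hU₁S, hU₁⟩ := v.exists_mwc_subset S₁ hS₁w.1
        have hiU₁ : i ∈ U₁ := by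
          by_contra hiU₁
          have hsub : U₁ ⊆ (S₁ ∪ {j}) \ {i} := by
            intro x hx
            simp only [Finset.mem_sdiff, Finset.mem_union, Finset.mem_singleton]
            exact ⟨Or.inl (hU₁S hx), fun he => hiU₁ (he ▸ hx)⟩
          have hwt := v.win_mono hsub hU₁.1
          rw [hS₁w.2] at hwt
          exact absurd hwt (by decide)
        have hjU₁ : j ∉ U₁ := fun h' => hjS₁ (hU₁S h')
        have hU₁bad : v.win ((U₁ ∪ {j}) \ {i}) = false := by
          by_contra hbb
          rw [Bool.not_eq_false] at hbb
          have hsub : (U₁ ∪ {j}) \ {i} ⊆ (S₁ ∪ {j}) \ {i} := by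
            intro x hx
            simp only [Finset.mem_sdiff, Finset.mem_union, Finset.mem_singleton] at hx ⊢
            rcases hx.1 with h' | h'
            · exact ⟨Or.inl (hU₁S h'), hx.2⟩
            · exact ⟨Or.inr h', hx.2⟩
          have hwt := v.win_mono hsub hbb
          rw [hS₁w.2] at hwt
          exact absurd hwt (by decide)
        set W : Finset (Finset (Fin n)) := Finset.univ.filter
          (fun U => v.IsMWC U ∧ i ∈ U ∧ j ∉ U ∧ v.win ((U ∪ {j}) \ {i}) = false)
          with hWdef
        have hU₁W : U₁ ∈ W := by
          simp only [hWdef, Finset.mem_filter, Finset.mem_univ, true_and]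
          exact ⟨hU₁, hiU₁, hjU₁, hU₁bad⟩
        obtain ⟨S₀, hS₀W, hS₀min⟩ := Finset.exists_min_image W Finset.card ⟨U₁, hU₁W⟩
        simp only [hWdef, Finset.mem_filter, Finset.mem_univ, true_and] at hS₀W
        obtain ⟨hS₀mwc, hiS₀, hjS₀, hS₀bad⟩ := hS₀W
        have hm : S₀.card ∈ Finset.Icc 1 n := by
          rw [Finset.mem_Icc]
          exact ⟨hS₀mwc.one_le_card, hS₀mwc.card_le⟩
        have hlt2 := v.cum_card_lt hij hdom S₀.card ?_ hS₀mwc hiS₀ hjS₀ le_rfl hS₀bad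
        · have hge := h S₀.card hm
          rw [SimpleGame.sum_mlset_card, SimpleGame.sum_mlset_card] at hge
          omega
        · intro U hU hiU hjU hcard
          by_contra hbb
          rw [Bool.not_eq_true] at hbb
          have hUW : U ∈ W := by
            simp only [hWdef, Finset.mem_filter, Finset.mem_univ, true_and]
            exact ⟨hU, hiU, hjU, hbb⟩
          have := hS₀min U hUW
          omega
  rw [SimpleGame.dp_eq_sum, SimpleGame.dp_eq_sum]
  exact abel_sum_le _ _ n cwt cwt_mono cwt_nonneg key
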